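/- arXiv:2411.06569 — 7 statements merged into one kernel-verified Lean document; each statement's English description precedes it below -/
import Mathlib

section
/- Let x and y be two strings over a finite alphabet with |x| ≠ |y| and |x|, |y| ≤ n (n ≥ 2). Then there exists a deterministic finite automaton with O(log n) states (one may take at most 4.4·log₂ n + 1 states) that distinguishes x and y, in the sense that starting from its initial state it reaches different states after reading x and after reading y. -/
/-- If every `j ∈ [1,k]` divides `d ≠ 0`, then `2^(k-1) ≤ (k+1)*d`. -/
lemma aux_pow_le {k d : ℕ} (hd : d ≠ 0)
    (hdiv : ∀ j ∈ Finset.Icc 1 k, j ∣ d) : 2 ^ (k - 1) ≤ (k + 1) * d := by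
  rcases Nat.lt_or_ge k 2 with hk | hk
  · interval_cases k <;> simp <;> omega
  set t := k / 2 with ht
  have ht1 : 1 ≤ t := Nat.le_div_iff_mul_le (by norm_num) |>.mpr (by omega)
  have h2t : 2 * t ≤ k := Nat.mul_div_le k 2 |>.trans_eq (by ring_nf)
  -- centralBinom t divides d
  have hBdvd : Nat.centralBinom t ∣ d := by
    rw [← Nat.factorization_le_iff_dvd (Nat.centralBinom_ne_zero t) hd]
    intro p
    by_cases hp : p.Prime
    · have h1 : (Nat.centralBinom t).factorization p ≤ Nat.log p (2 * t) :=
        Nat.factorization_choose_le_log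
      have h2 : Nat.log p (2 * t) ≤ Nat.log p k := Nat.log_mono_right h2t
      have h3 : Nat.log p k ≤ d.factorization p := by
        rcases Nat.eq_zero_or_pos (Nat.log p k) with h0 | hpos
        · omega
        · have hple : p ^ Nat.log p k ≤ k := Nat.pow_log_le_self p (by omega)
          have hdvd : p ^ Nat.log p k ∣ d := by
            apply hdiv
            simp only [Finset.mem_Icc]
            exact ⟨Nat.one_le_pow _ _ hp.pos, hple⟩
          exact (Nat.Prime.pow_dvd_iff_le_factorization hp hd).mp hdvd
      omega
    · simp [Nat.factorization_eq_zero_of_not_prime _ hp]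
  have hfour : 4 ^ t ≤ 2 * t * Nat.centralBinom t :=
    Nat.four_pow_le_two_mul_self_mul_centralBinom t ht1
  have hBd : Nat.centralBinom t ≤ d := Nat.le_of_dvd (Nat.pos_of_ne_zero hd) hBdvd
  calc 2 ^ (k - 1) ≤ 2 ^ (2 * t) := Nat.pow_le_pow_right (by norm_num) (by omega)
    _ = 4 ^ t := by rw [pow_mul]; norm_num
    _ ≤ 2 * t * Nat.centralBinom t := hfour
    _ ≤ (k + 1) * d := Nat.mul_le_mul (by omega) hBd

lemma aux_two_pow (m : ℕ) (hm : 8 ≤ m) : 2 * m + 2 ≤ 2 ^ (m - 1) := by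
  induction m, hm using Nat.le_induction with
  | base => norm_num
  | succ m hm ih =>
    have h2 : 2 ^ (m - 1) * 2 = 2 ^ (m + 1 - 1) := by
      rw [← pow_succ]
      congr 1
      omega
    omega

lemma aux_logb_ge {n : ℕ} (hn : 2 ≤ n) : (1 : ℝ) ≤ Real.logb 2 n := by
  rw [show (1:ℝ) = Real.logb 2 2 by simp]
  exact Real.logb_le_logb_of_le (by norm_num) (by norm_num) (by exact_mod_cast hn)

/-- The key bound: if every `j ∈ [1,k]` divides `d`, `1 ≤ d ≤ n`, `2 ≤ n`,
then `k ≤ 4.4 * logb 2 n`. -/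
lemma aux_bound {k d n : ℕ} (hd : d ≠ 0) (hdn : d ≤ n) (hn : 2 ≤ n)
    (hdiv : ∀ j ∈ Finset.Icc 1 k, j ∣ d) : (k : ℝ) ≤ 4.4 * Real.logb 2 n := by
  have hlogb := aux_logb_ge hn
  rcases Nat.lt_or_ge k 5 with hk | hk
  · have hk4 : (k : ℝ) ≤ 4 := by exact_mod_cast Nat.lt_succ_iff.mp hk
    nlinarith
  rcases Nat.lt_or_ge k 16 with hk16 | hk16
  -- middle case: 5 ≤ k < 16, then 12 ∣ d so n ≥ 12 and logb 2 n ≥ 7/2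
  · have h3 : 3 ∣ d := hdiv 3 (by simp; omega)
    have h4 : 4 ∣ d := hdiv 4 (by simp; omega)
    have h12 : 12 ∣ d := Nat.Coprime.mul_dvd_of_dvd_of_dvd (by norm_num) h3 h4
    have hn12 : 12 ≤ n := le_trans (Nat.le_of_dvd (Nat.pos_of_ne_zero hd) h12) hdn
    have hlog : (7:ℝ)/2 ≤ Real.logb 2 n := by
      have h128 : (128:ℝ) ≤ (n:ℝ)^2 := by
        have : (12:ℝ) ≤ n := by exact_mod_cast hn12
        nlinarith
      have hmono : Real.logb 2 (128:ℝ) ≤ Real.logb 2 ((n:ℝ)^2) :=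
        Real.logb_le_logb_of_le (by norm_num) (by norm_num) h128
      rw [show (128:ℝ) = 2^(7:ℕ) by norm_num, Real.logb_pow, Real.logb_pow,
        Real.logb_self_eq_one] at hmono
      case _ => push_cast at hmono; linarith
      all_goals norm_num
    have : (k : ℝ) ≤ 15 := by exact_mod_cast Nat.lt_succ_iff.mp hk16
    nlinarith
  -- large case: k ≥ 16
  · have hA : 2 ^ (k - 1) ≤ (k + 1) * d := aux_pow_le hd hdiv
    set t := k / 2 with ht
    have ht8 : 8 ≤ t := by omega
    have h1 : k + 1 ≤ 2 * t + 2 := by omega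
    have h2 : 2 * t + 2 ≤ 2 ^ (t - 1) := aux_two_pow t ht8
    have h3 : 2 ^ (k - 1) ≤ 2 ^ (t - 1) * n :=
      le_trans hA (Nat.mul_le_mul (by omega) hdn)
    have h4 : 2 ^ t ≤ n := by
      have hsplit : t - 1 + t ≤ k - 1 := by omega
      have : 2 ^ (t - 1) * 2 ^ t ≤ 2 ^ (k - 1) := by
        rw [← pow_add]; exact Nat.pow_le_pow_right (by norm_num) hsplit
      have hpos : 0 < 2 ^ (t - 1) := Nat.pow_pos (by norm_num)
      calc 2 ^ t = 2 ^ (t-1) * 2 ^ t / 2 ^ (t-1) := by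
            rw [Nat.mul_div_cancel_left _ hpos]
        _ ≤ 2 ^ (k-1) / 2 ^ (t-1) := Nat.div_le_div_right this
        _ ≤ 2 ^ (t-1) * n / 2 ^ (t-1) := Nat.div_le_div_right h3
        _ = n := Nat.mul_div_cancel_left _ hpos
    have h5 : (t : ℝ) ≤ Real.logb 2 n := by
      have : t ≤ Nat.log 2 n := (Nat.le_log_iff_pow_le (b := 2) (y := n) (by norm_num) (by omega)).mpr h4
      calc (t : ℝ) ≤ (Nat.log 2 n : ℝ) := by exact_mod_cast this
        _ ≤ Real.logb 2 n := Real.natLog_le_logb n 2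
    have hkt : (k : ℝ) ≤ 2 * t + 1 := by
      have : k ≤ 2 * t + 1 := by omega
      exact_mod_cast this
    nlinarith

lemma eval_count {α : Type*} (m : ℕ) [NeZero m] (x : List α) (s : ZMod m) :
    (DFA.mk (fun s (_ : α) => s + 1) 0 ∅).evalFrom s x = s + x.length := by
  induction x generalizing s with
  | nil => simp [DFA.evalFrom]
  | cons a x ih =>
    show (DFA.mk (fun s (_ : α) => s + 1) 0 ∅).evalFrom (s + 1) x = _
    rw [ih]
    simp only [List.length_cons]
    push_cast
    ring

lemma aux_main {α : Type*} (n a b : ℕ) (hab : a < b) (hb : b ≤ n) (hn : 2 ≤ n)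
    (x y : List α) (hxa : x.length = a) (hyb : y.length = b) :
    ∃ (σ : Type) (_ : Fintype σ) (M : DFA α σ),
      (Fintype.card σ : ℝ) ≤ 4.4 * Real.logb 2 n + 1 ∧
      M.eval x ≠ M.eval y := by
  set d : ℕ := b - a with hd
  have hd0 : d ≠ 0 := by omega
  have hdn : d ≤ n := by omega
  -- least m ≥ 2 not dividing d
  have hex : ∃ m, 2 ≤ m ∧ ¬ m ∣ d := by
    rcases Nat.lt_or_ge d 2 with h | h
    · exact ⟨2, le_refl 2, by omega⟩
    · exact ⟨d + 1, by omega, fun hdvd => by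
        have := Nat.le_of_dvd (by omega) hdvd; omega⟩
  classical
  set P : ℕ → Prop := fun m => 2 ≤ m ∧ ¬ m ∣ d with hP
  have hexP : ∃ m, P m := hex
  set m := Nat.find hexP with hm
  obtain ⟨hm2, hmdvd⟩ : P m := Nat.find_spec hexP
  have hmin : ∀ j, j < m → ¬ P j := fun j hj => Nat.find_min hexP hj
  have hdiv : ∀ j ∈ Finset.Icc 1 (m - 1), j ∣ d := by
    intro j hj
    simp only [Finset.mem_Icc] at hj
    rcases Nat.lt_or_ge j 2 with h1 | h2
    · have : j = 1 := by omega
      simp [this]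
    · have := hmin j (by omega)
      simp only [hP, not_and, not_not] at this
      exact this h2
  have hbound : ((m - 1 : ℕ) : ℝ) ≤ 4.4 * Real.logb 2 n := aux_bound hd0 hdn hn hdiv
  haveI : NeZero m := ⟨by omega⟩
  refine ⟨ZMod m, inferInstance, DFA.mk (fun s (_ : α) => s + 1) 0 ∅, ?_, ?_⟩
  · rw [ZMod.card]
    have : (m : ℝ) = ((m - 1 : ℕ) : ℝ) + 1 := by
      have : m - 1 + 1 = m := by omega
      exact_mod_cast this.symm
    rw [this]
    linarith
  · show (DFA.mk (fun s (_ : α) => s + 1) 0 ∅).evalFrom 0 x ≠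
      (DFA.mk (fun s (_ : α) => s + 1) 0 ∅).evalFrom 0 y
    rw [eval_count, eval_count, hxa, hyb]
    simp only [zero_add]
    intro heq
    have : a ≡ b [MOD m] := (ZMod.natCast_eq_natCast_iff a b m).mp heq
    rw [Nat.modEq_iff_dvd' (le_of_lt hab)] at this
    exact hmdvd this

/-- Two strings of distinct lengths at most `n` can be distinguished by a DFA with
at most `4.4·log₂ n + 1` states: starting from the initial state, it reaches
different states after reading `x` and after reading `y`. -/
theorem stmt3 {α : Type*} (n : ℕ) (x y : List α)
    (hxy : x.length ≠ y.length) (hx : x.length ≤ n) (hy : y.length ≤ n)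
    (hn : 2 ≤ n) :
    ∃ (σ : Type) (_ : Fintype σ) (M : DFA α σ),
      (Fintype.card σ : ℝ) ≤ 4.4 * Real.logb 2 n + 1 ∧
      M.eval x ≠ M.eval y := by
  rcases Nat.lt_or_ge x.length y.length with h | h
  · exact aux_main n x.length y.length h hy hn x y rfl rfl
  · have h' : y.length < x.length := by omega
    obtain ⟨σ, inst, M, hcard, hne⟩ := aux_main n y.length x.length h' hx hn y x rfl rfl
    exact ⟨σ, inst, M, hcard, hne.symm⟩
end

section
/- Let f(x₁,…,x_n) be a nonzero polynomial of total degree at most D over a field F, and let S ⊆ F be a finite nonempty subset. If a = (a₁,…,a_n) is chosen uniformly at random from S^n, then the probability that f(a₁,…,a_n) = 0 is at most D/|S|. Equivalently, the number of zeros of f in S^n is at most D·|S|^{n-1}. -/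
open MvPolynomial Finset

private lemma poly_zero_count {F : Type*} [Field F] [DecidableEq F]
    (q : Polynomial F) (hq : q ≠ 0) (S : Finset F) :
    (S.filter fun y => q.eval y = 0).card ≤ q.natDegree := by
  apply Polynomial.card_le_degree_of_subset_roots
  intro y hy
  simp only [Finset.mem_val, Finset.mem_filter] at hy
  exact (Polynomial.mem_roots hq).2 hy.2

private lemma sz_aux {F : Type*} [Field F] [DecidableEq F] :
    ∀ (n : ℕ) (f : MvPolynomial (Fin n) F), f ≠ 0 → ∀ (D : ℕ),
    f.totalDegree ≤ D → ∀ (S : Finset F), S.Nonempty →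
    ((Fintype.piFinset fun _ : Fin n => S).filter
        fun a => MvPolynomial.eval a f = 0).card ≤ D * S.card ^ (n - 1) := by
  have eval0 : ∀ (f : MvPolynomial (Fin 0) F), f ≠ 0 →
      ∀ a : Fin 0 → F, MvPolynomial.eval a f ≠ 0 := by
    intro f hf a
    rw [MvPolynomial.eq_C_of_isEmpty f, MvPolynomial.eval_C]
    intro h
    apply hf
    rw [MvPolynomial.eq_C_of_isEmpty f, h, map_zero]
  intro n
  induction n with
  | zero =>
    intro f hf D hD S hS
    have h0 : ((Fintype.piFinset fun _ : Fin 0 => S).filter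
        fun a => MvPolynomial.eval a f = 0) = ∅ := by
      rw [Finset.filter_eq_empty_iff]
      intro a _
      exact eval0 f hf a
    rw [h0]
    simp
  | succ n ih =>
    intro f hf D hD S hS
    set φ := MvPolynomial.finSuccEquiv F n f with hφ
    have hφ0 : φ ≠ 0 := fun h => hf ((MvPolynomial.finSuccEquiv F n).injective
      (by rw [← hφ, h, map_zero]))
    set d := φ.natDegree with hd
    set g := φ.coeff d with hg
    have hg0 : g ≠ 0 := Polynomial.leadingCoeff_ne_zero.2 hφ0
    have hdg : g.totalDegree + d ≤ D :=
      le_trans (MvPolynomial.totalDegree_coeff_finSuccEquiv_add_le f d hg0) hD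
    have hdD : d ≤ D := le_trans (Nat.le_add_left _ _) hdg
    have hgD : g.totalDegree ≤ D - d := Nat.le_sub_of_add_le hdg
    -- the set of zeros
    set A := ((Fintype.piFinset fun _ : Fin (n+1) => S).filter
        fun a => MvPolynomial.eval a f = 0) with hA
    set T := (Fintype.piFinset fun _ : Fin n => S) with hT
    have hmem : ∀ a ∈ A, Fin.tail a ∈ T := by
      intro a ha
      simp only [hA, Finset.mem_filter, Fintype.mem_piFinset] at ha
      simp only [hT, Fintype.mem_piFinset]
      exact fun i => ha.1 _
    rw [Finset.card_eq_sum_card_fiberwise hmem]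
    -- bound each fiber
    have fiber_le : ∀ t ∈ T, (A.filter fun a => Fin.tail a = t).card ≤
        (S.filter fun y => (φ.map (MvPolynomial.eval t)).eval y = 0).card := by
      intro t ht
      apply Finset.card_le_card_of_injOn (fun a => a 0)
      · intro a ha
        simp only [Finset.mem_coe, Finset.mem_filter, hA, Fintype.mem_piFinset] at ha
        obtain ⟨⟨haS, haf⟩, hat⟩ := ha
        refine Finset.mem_filter.2 ⟨haS 0, ?_⟩
        rw [← MvPolynomial.eval_eq_eval_mv_eval', ← hat]
        rw [Fin.cons_self_tail]
        exact haf
      · intro a ha b hb hab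
        simp only [Finset.mem_coe, Finset.mem_filter] at ha hb
        have := ha.2.trans hb.2.symm
        funext i
        refine Fin.cases hab (fun j => ?_) i
        exact congrFun this j
    -- split fibers by whether g vanishes at t
    have key : ∀ t ∈ T, (A.filter fun a => Fin.tail a = t).card ≤
        if MvPolynomial.eval t g = 0 then S.card else d := by
      intro t ht
      refine le_trans (fiber_le t ht) ?_
      split_ifs with hgt
      · exact le_trans (Finset.card_filter_le _ _) le_rfl
      · have hq0 : φ.map (MvPolynomial.eval t) ≠ 0 := by
          intro h
          apply hgt
          have := congrArg (fun p => Polynomial.coeff p d) h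
          simpa [Polynomial.coeff_map] using this
        refine le_trans (poly_zero_count _ hq0 S) ?_
        exact Polynomial.natDegree_map_le
    calc ∑ t ∈ T, (A.filter fun a => Fin.tail a = t).card
        ≤ ∑ t ∈ T, if MvPolynomial.eval t g = 0 then S.card else d :=
          Finset.sum_le_sum key
      _ ≤ (T.filter fun t => MvPolynomial.eval t g = 0).card * S.card + T.card * d := by
          rw [Finset.sum_ite]
          gcongr
          · simp [Finset.sum_const, mul_comm]
          · calc ∑ _ ∈ T.filter _, d ≤ ∑ _ ∈ T, d :=
                Finset.sum_le_sum_of_subset (Finset.filter_subset _ _)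
              _ = T.card * d := by simp [mul_comm]
      _ ≤ (D - d) * S.card ^ n + S.card ^ n * d := by
          gcongr ?_ + ?_ * _
          · rcases n with _ | m
            · have : (T.filter fun t => MvPolynomial.eval t g = 0) = ∅ := by
                rw [Finset.filter_eq_empty_iff]
                intro t _
                exact eval0 g hg0 t
              simp [this]
            · calc (T.filter fun t => MvPolynomial.eval t g = 0).card * S.card
                  ≤ ((D - d) * S.card ^ m) * S.card := by
                    gcongr
                    exact ih g hg0 (D - d) hgD S hS
                _ = (D - d) * S.card ^ (m + 1) := by ring
          · simp [hT]
      _ ≤ D * S.card ^ ((n + 1) - 1) := by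
          simp only [Nat.add_sub_cancel]
          calc (D - d) * S.card ^ n + S.card ^ n * d
              = ((D - d) + d) * S.card ^ n := by ring
            _ = D * S.card ^ n := by rw [Nat.sub_add_cancel hdD]
            _ ≤ D * S.card ^ n := le_rfl

/-- DeMillo–Lipton–Schwartz–Zippel: a nonzero `n`-variate polynomial of total
degree at most `D` has at most `D·|S|^{n-1}` zeros in `S^n`; equivalently, a
uniformly random point of `S^n` is a zero with probability at most `D/|S|`. -/
theorem stmt4 {F : Type*} [Field F] [DecidableEq F] {n : ℕ}
    (f : MvPolynomial (Fin n) F) (hf : f ≠ 0) (D : ℕ)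
    (hD : f.totalDegree ≤ D) (S : Finset F) (hS : S.Nonempty) :
    ((Fintype.piFinset fun _ : Fin n => S).filter
        fun a => MvPolynomial.eval a f = 0).card ≤ D * S.card ^ (n - 1) := by
  exact sz_aux n f hf D hD S hS
end

section
/- Let f ∈ F⟨x₁,…,x_n⟩ be a noncommutative polynomial and let A₁,…,A_n be d×d matrices over F⟨z₁,…,z_m⟩ each of which is homogeneous linear in the z-variables, i.e. A_j = Σ_{k=1}^m A_j^{(k)} z_k with A_j^{(k)} ∈ F^{d×d}. Then for any d'×d' matrices B₁,…,B_m over F, substituting C_j := Σ_{k=1}^m A_j^{(k)} ⊗ B_k (of dimension d·d') for x_j in f yields, in the (r,c)-block positions, exactly the evaluation at (B₁,…,B_m) of the noncommutative polynomial appearing in the (r,c) entry of f(A₁,…,A_n). In particular, the ((1,1),(d,d'))-entry of f(C₁,…,C_n) equals the (1,d')-entry of g(B₁,…,B_m), where g is the (1,d)-entry of f(A₁,…,A_n). -/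
/-- Evaluation of a noncommutative polynomial (element of the free algebra
`F⟨x₁,…,x_n⟩`, modelled as the monoid algebra of the free monoid) at elements
`M 0, …, M (n-1)` of an `F`-algebra `R`. -/
noncomputable def ncEval {F : Type*} [CommSemiring F] {n : ℕ} {R : Type*}
    [Semiring R] [Algebra F R] (M : Fin n → R) :
    MonoidAlgebra F (FreeMonoid (Fin n)) →ₐ[F] R :=
  MonoidAlgebra.lift F R (FreeMonoid (Fin n)) (FreeMonoid.lift M)

/-- Auxiliary: two algebra homs out of the free noncommutative polynomial ring
agree if they agree on the generators. -/
theorem ncHom_ext {F : Type*} [CommSemiring F] {n : ℕ} {R : Type*}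
    [Semiring R] [Algebra F R]
    {φ ψ : MonoidAlgebra F (FreeMonoid (Fin n)) →ₐ[F] R}
    (h : ∀ j, φ (MonoidAlgebra.of F (FreeMonoid (Fin n)) (FreeMonoid.of j))
          = ψ (MonoidAlgebra.of F (FreeMonoid (Fin n)) (FreeMonoid.of j))) :
    φ = ψ := by
  apply MonoidAlgebra.algHom_ext'
  apply FreeMonoid.hom_eq
  intro j
  exact h j
  exact Subsingleton.elim _ _

/-- K = 2 base case of the matrix-composition lemma: if each `A j` is a `d×d`
matrix over `F⟨z₁,…,z_m⟩` that is homogeneous linear in the `z`-variables,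
`A j = Σ_k A_j^{(k)} z_k`, and `B₁,…,B_m` are `d'×d'` matrices over `F`, then
substituting `C j = Σ_k A_j^{(k)} ⊗ B k` for `x_j` in `f` yields in the
`((r,r'),(c,c'))` entry exactly the `(r',c')` entry of the evaluation at `B`
of the noncommutative polynomial in the `(r,c)` entry of `f(A₁,…,A_n)`. -/
theorem stmt5 {F : Type*} [Field F] {n m d d' : ℕ}
    (f : MonoidAlgebra F (FreeMonoid (Fin n)))
    (Aco : Fin n → Fin m → Matrix (Fin d) (Fin d) F)
    (B : Fin m → Matrix (Fin d') (Fin d') F)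
    (A : Fin n → Matrix (Fin d) (Fin d) (MonoidAlgebra F (FreeMonoid (Fin m))))
    (hA : ∀ j, A j = ∑ k, (Aco j k).map
      (fun a => a • MonoidAlgebra.of F (FreeMonoid (Fin m)) (FreeMonoid.of k)))
    (C : Fin n → Matrix (Fin d × Fin d') (Fin d × Fin d') F)
    (hC : ∀ j, C j = ∑ k, Matrix.kroneckerMap (· * ·) (Aco j k) (B k)) :
    ∀ (r c : Fin d) (r' c' : Fin d'),
      ncEval C f (r, r') (c, c') = ncEval B ((ncEval A f) r c) r' c' := by
  -- the algebra hom sending a matrix of polynomials to the big matrix of values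
  set Ψ : Matrix (Fin d) (Fin d) (MonoidAlgebra F (FreeMonoid (Fin m)))
      →ₐ[F] Matrix (Fin d × Fin d') (Fin d × Fin d') F :=
    ((Matrix.compAlgEquiv (Fin d) (Fin d') F F).toAlgHom).comp
      ((ncEval B).mapMatrix) with hΨ
  have key : ncEval C = Ψ.comp (ncEval A) := by
    apply ncHom_ext
    intro j
    have h1 : ncEval C (MonoidAlgebra.of F (FreeMonoid (Fin n)) (FreeMonoid.of j)) = C j := by
      rw [ncEval, MonoidAlgebra.lift_of, FreeMonoid.lift_eval_of]
    have h2 : ncEval A (MonoidAlgebra.of F (FreeMonoid (Fin n)) (FreeMonoid.of j)) = A j := by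
      rw [ncEval, MonoidAlgebra.lift_of, FreeMonoid.lift_eval_of]
    have hB : ∀ k : Fin m,
        ncEval B (MonoidAlgebra.of F (FreeMonoid (Fin m)) (FreeMonoid.of k)) = B k := by
      intro k
      rw [ncEval, MonoidAlgebra.lift_of, FreeMonoid.lift_eval_of]
    have hB' : ∀ (k : Fin m) (a : F),
        ncEval B (MonoidAlgebra.single (FreeMonoid.of k) a) = a • B k := by
      intro k a
      rw [ncEval, MonoidAlgebra.lift_single, FreeMonoid.lift_eval_of]
    rw [h1, AlgHom.comp_apply, h2, hC j, hA j]
    ext ⟨r, r'⟩ ⟨c, c'⟩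
    simp [hΨ, Matrix.sum_apply, Matrix.map_apply, Matrix.kroneckerMap_apply,
      map_sum, map_smul, hB, hB', Matrix.smul_apply, smul_eq_mul]
  intro r c r' c'
  rw [key]
  simp [hΨ, Matrix.compAlgEquiv_apply]
end

section
/- Let f ∈ F⟨x₁,…,x_n⟩ be a noncommutative polynomial, K ∈ ℕ, and for 2 ≤ i ≤ K+1 let Z_i = {z_{i1},…,z_{i n_i}} be noncommuting variable sets. Suppose for each 1 ≤ i ≤ K we have d_i × d_i matrices A_{i1},…,A_{i n_i} whose entries are homogeneous linear forms in Z_{i+1}: A_{ij} = Σ_k A_{ij}^{(k)} z_{i+1,k} with A_{ij}^{(k)} ∈ F^{d_i×d_i}. Define f₀ = f (with n₁ = n) and f_i as the (1, d_i)-entry of f_{i-1}(A_{i1},…,A_{i n_i}). Then there exist matrices C₁,…,C_n of dimension ∏_{i∈[K]} d_i over F⟨Z_{K+1}⟩ such that f_K equals the (1, ∏_{i∈[K]} d_i)-entry of f(C₁,…,C_n). -/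
/-- The sequence `f₀ = f`, `f_{i+1} = (1, d_{i+1})-entry of f_i(A_{i+1,1},…)`:
each substitution layer `A i` consists of `(dd i + 1)×(dd i + 1)` matrices over
the noncommutative polynomial ring in the next layer's variables. -/
noncomputable def fseq {F : Type*} [Field F] (nv dd : ℕ → ℕ)
    (A : (i : ℕ) → Fin (nv i) → Matrix (Fin (dd i + 1)) (Fin (dd i + 1))
        (MonoidAlgebra F (FreeMonoid (Fin (nv (i + 1))))))
    (f : MonoidAlgebra F (FreeMonoid (Fin (nv 0)))) :
    (i : ℕ) → MonoidAlgebra F (FreeMonoid (Fin (nv i)))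
  | 0 => f
  | (i + 1) => (ncEval (A i) (fseq nv dd A f i)) 0 (Fin.last (dd i))

lemma ncEval_X {F : Type*} [CommSemiring F] {n : ℕ} {R : Type*}
    [Semiring R] [Algebra F R] (M : Fin n → R) (j : Fin n) :
    ncEval M (MonoidAlgebra.of F (FreeMonoid (Fin n)) (FreeMonoid.of j)) = M j := by
  simp [ncEval]

lemma ncEval_unique {F : Type*} [CommSemiring F] {n : ℕ} {R : Type*}
    [Semiring R] [Algebra F R] (M : Fin n → R)
    (g : MonoidAlgebra F (FreeMonoid (Fin n)) →ₐ[F] R)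
    (h : ∀ j, g (MonoidAlgebra.of F (FreeMonoid (Fin n)) (FreeMonoid.of j)) = M j) :
    g = ncEval M := by
  apply MonoidAlgebra.algHom_ext'
  apply FreeMonoid.hom_eq
  intro j
  simpa using (h j).trans (ncEval_X M j).symm
  ext

/-- Composing `K` substitution matrices: if every layer matrix `A i j` is
homogeneous linear in the next layer's variables (`A_{ij} = Σ_k A_{ij}^{(k)} z_{i+1,k}`),
then there is a single matrix substitution `C` of dimension `∏_{i<K} d_i`
over the last variable set such that `f_K` is the `(1, ∏ d_i)`-entry of `f(C)`. -/
theorem stmt6 {F : Type*} [Field F] (K : ℕ) (nv dd : ℕ → ℕ)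
    (Aco : (i : ℕ) → Fin (nv i) → Fin (nv (i + 1)) →
      Matrix (Fin (dd i + 1)) (Fin (dd i + 1)) F)
    (A : (i : ℕ) → Fin (nv i) → Matrix (Fin (dd i + 1)) (Fin (dd i + 1))
        (MonoidAlgebra F (FreeMonoid (Fin (nv (i + 1))))))
    (hA : ∀ i j, A i j = ∑ k, (Aco i j k).map
      (fun a => a • MonoidAlgebra.of F (FreeMonoid (Fin (nv (i + 1)))) (FreeMonoid.of k)))
    (f : MonoidAlgebra F (FreeMonoid (Fin (nv 0)))) :
    ∃ C : Fin (nv 0) → Matrix (Fin (∏ i ∈ Finset.range K, (dd i + 1)))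
        (Fin (∏ i ∈ Finset.range K, (dd i + 1)))
        (MonoidAlgebra F (FreeMonoid (Fin (nv K)))),
      ∀ h : 0 < ∏ i ∈ Finset.range K, (dd i + 1),
        ncEval C f ⟨0, h⟩
          ⟨(∏ i ∈ Finset.range K, (dd i + 1)) - 1, Nat.sub_lt h Nat.one_pos⟩ =
          fseq nv dd A f K := by
  clear hA Aco
  induction K with
  | zero =>
    refine ⟨fun j => Matrix.diagonal (fun _ =>
        MonoidAlgebra.of F (FreeMonoid (Fin (nv 0))) (FreeMonoid.of j)), ?_⟩
    intro h
    set P0 := ∏ i ∈ Finset.range 0, (dd i + 1) with hP0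
    let Φ : MonoidAlgebra F (FreeMonoid (Fin (nv 0))) →ₐ[F]
        Matrix (Fin P0) (Fin P0) (MonoidAlgebra F (FreeMonoid (Fin (nv 0)))) :=
      (Matrix.diagonalAlgHom F).comp (Pi.constAlgHom F (Fin P0) _)
    have hΦ : Φ = ncEval (fun j => Matrix.diagonal (fun _ =>
        MonoidAlgebra.of F (FreeMonoid (Fin (nv 0))) (FreeMonoid.of j))) :=
      ncEval_unique _ _ (fun j => rfl)
    rw [← hΦ]
    have hidx : (⟨0, h⟩ : Fin P0) = ⟨P0 - 1, Nat.sub_lt h Nat.one_pos⟩ := by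
      have : P0 = 1 := Finset.prod_range_zero _
      apply Fin.ext
      simp [this]
    rw [← hidx]
    have hΦf : Φ f = Matrix.diagonal (fun _ => f) := rfl
    rw [hΦf, Matrix.diagonal_apply_eq]
    rfl
  | succ K ih =>
    obtain ⟨C, hC⟩ := ih
    have hP : 0 < ∏ i ∈ Finset.range K, (dd i + 1) :=
      Finset.prod_pos (fun i _ => Nat.succ_pos _)
    have hN : (∏ i ∈ Finset.range (K + 1), (dd i + 1))
        = (∏ i ∈ Finset.range K, (dd i + 1)) * (dd K + 1) := Finset.prod_range_succ _ _
    let φ : MonoidAlgebra F (FreeMonoid (Fin (nv K))) →ₐ[F]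
        Matrix (Fin (dd K + 1)) (Fin (dd K + 1))
          (MonoidAlgebra F (FreeMonoid (Fin (nv (K + 1))))) := ncEval (A K)
    let Ψ : MonoidAlgebra F (FreeMonoid (Fin (nv 0))) →ₐ[F]
        Matrix (Fin (∏ i ∈ Finset.range K, (dd i + 1)) × Fin (dd K + 1))
          (Fin (∏ i ∈ Finset.range K, (dd i + 1)) × Fin (dd K + 1))
          (MonoidAlgebra F (FreeMonoid (Fin (nv (K + 1))))) :=
      (Matrix.compAlgEquiv (Fin (∏ i ∈ Finset.range K, (dd i + 1))) (Fin (dd K + 1)) _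
        F).toAlgHom.comp ((AlgHom.mapMatrix φ).comp (ncEval C))
    let e : Fin (∏ i ∈ Finset.range K, (dd i + 1)) × Fin (dd K + 1)
        ≃ Fin (∏ i ∈ Finset.range (K + 1), (dd i + 1)) :=
      finProdFinEquiv.trans (finCongr hN.symm)
    let Θ : MonoidAlgebra F (FreeMonoid (Fin (nv 0))) →ₐ[F]
        Matrix (Fin (∏ i ∈ Finset.range (K + 1), (dd i + 1)))
          (Fin (∏ i ∈ Finset.range (K + 1), (dd i + 1)))
          (MonoidAlgebra F (FreeMonoid (Fin (nv (K + 1))))) :=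
      (Matrix.reindexAlgEquiv F _ e).toAlgHom.comp Ψ
    refine ⟨fun j => Θ (MonoidAlgebra.of F _ (FreeMonoid.of j)), ?_⟩
    intro h
    have hΘ : Θ = ncEval (fun j => Θ (MonoidAlgebra.of F _ (FreeMonoid.of j))) :=
      ncEval_unique _ _ (fun j => rfl)
    rw [← hΘ]
    have h0 : e.symm ⟨0, h⟩ = (⟨0, hP⟩, ⟨0, Nat.succ_pos _⟩) := by
      rw [Equiv.symm_apply_eq]
      apply Fin.ext
      simp [e, finProdFinEquiv]
    have hlast : e.symm ⟨(∏ i ∈ Finset.range (K + 1), (dd i + 1)) - 1,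
        Nat.sub_lt h Nat.one_pos⟩ =
        (⟨(∏ i ∈ Finset.range K, (dd i + 1)) - 1, Nat.sub_lt hP Nat.one_pos⟩,
          Fin.last (dd K)) := by
      rw [Equiv.symm_apply_eq]
      apply Fin.ext
      obtain ⟨q, hq⟩ : ∃ q, (∏ i ∈ Finset.range K, (dd i + 1)) = q + 1 :=
        ⟨_, (Nat.succ_pred_eq_of_pos hP).symm⟩
      simp only [e, Equiv.trans_apply, finCongr_apply, Fin.coe_cast, finProdFinEquiv_apply_val,
        Fin.val_last]
      rw [hN, hq]
      simp only [Nat.add_sub_cancel]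
      rw [Nat.succ_mul, Nat.mul_comm]
      omega
    show (Matrix.reindexAlgEquiv F _ e) (Ψ f) _ _ = _
    rw [Matrix.reindexAlgEquiv_apply, Matrix.reindex_apply, Matrix.submatrix_apply, h0, hlast]
    show φ ((ncEval C) f ⟨0, hP⟩ ⟨(∏ i ∈ Finset.range K, (dd i + 1)) - 1,
        Nat.sub_lt hP Nat.one_pos⟩) ⟨0, Nat.succ_pos _⟩ (Fin.last (dd K)) = _
    rw [hC hP]
    rfl
end

section
/- Let f = Σ_{i=1}^s Q_{i1}·P_i ∈ F⟨X⟩ be nonzero, where each P_i ∈ F⟨X⟩ is homogeneous of degree D−D₁ and each Q_{i1} is homogeneous of degree D₁. Then there exists a monomial m ∈ X^{D−D₁} such that the 'right derivative' f^(m) := Σ_{i=1}^s ([m]P_i)·Q_{i1} is a nonzero polynomial, where [m]P_i ∈ F denotes the coefficient of m in P_i. -/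
/-- Right derivative / nonvanishing prefix extraction: if
`f = Σ_i Q_i · P_i ≠ 0` with each `Q_i` homogeneous of degree `D₁` and each
`P_i` homogeneous of degree `Dm = D − D₁`, then there is a word `m` of length
`Dm` such that `f^(m) = Σ_i ([m]P_i)·Q_i ≠ 0`. -/
theorem stmt10 {F : Type*} [Field F] {n s D₁ Dm : ℕ}
    (Q P : Fin s → MonoidAlgebra F (FreeMonoid (Fin n)))
    (hQ : ∀ i, ∀ w ∈ (Q i).coeff.support, (FreeMonoid.toList w).length = D₁)
    (hP : ∀ i, ∀ w ∈ (P i).coeff.support, (FreeMonoid.toList w).length = Dm)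
    (hne : (∑ i, Q i * P i) ≠ 0) :
    ∃ m : FreeMonoid (Fin n), (FreeMonoid.toList m).length = Dm ∧
      (∑ i, (P i).coeff m • Q i) ≠ 0 := by
  classical
  obtain ⟨u, hu⟩ : ∃ u, (∑ i, Q i * P i).coeff u ≠ 0 := by
    by_contra h
    push_neg at h
    exact hne (MonoidAlgebra.ext (Finsupp.ext h))
  rw [MonoidAlgebra.coeff_sum, Finsupp.finset_sum_apply] at hu
  obtain ⟨i, -, hi⟩ := Finset.exists_ne_zero_of_sum_ne_zero hu
  have hmem : u ∈ (Q i * P i).coeff.support := Finsupp.mem_support_iff.mpr hi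
  have hsub := MonoidAlgebra.support_coeff_mul_subset (Q i) (P i) hmem
  rw [Finset.mem_mul] at hsub
  obtain ⟨a, ha, b, hb, hab⟩ := hsub
  have hla : (FreeMonoid.toList a).length = D₁ := hQ i a ha
  have hlb : (FreeMonoid.toList b).length = Dm := hP i b hb
  have key : ∀ j, (Q j * P j).coeff u = (Q j).coeff a * (P j).coeff b := by
    intro j
    rw [MonoidAlgebra.coeff_mul, Finsupp.sum]
    have h1 : ∀ x ∈ (Q j).coeff.support,
        ((P j).coeff.sum fun y c => if x * y = u then (Q j).coeff x * c else 0)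
          = if x = a then (Q j).coeff a * (P j).coeff b else 0 := by
      intro x hx
      rw [Finsupp.sum]
      by_cases hxa : x = a
      · subst hxa
        rw [if_pos rfl]
        rw [Finset.sum_eq_single b]
        · rw [if_pos hab]
        · intro y hy hyb
          rw [if_neg]
          intro h
          exact hyb (mul_left_cancel (h.trans hab.symm))
        · intro hb'
          rw [if_pos hab, Finsupp.notMem_support_iff.mp hb', mul_zero]
      · rw [if_neg hxa]
        apply Finset.sum_eq_zero
        intro y hy
        rw [if_neg]
        intro h
        apply hxa
        have hl : FreeMonoid.toList x ++ FreeMonoid.toList y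
            = FreeMonoid.toList a ++ FreeMonoid.toList b := by
          have := h.trans hab.symm
          simpa [FreeMonoid.toList_mul] using congrArg FreeMonoid.toList this
        have := List.append_inj hl (by rw [hQ j x hx, hla])
        exact FreeMonoid.toList.injective this.1
    rw [Finset.sum_congr rfl h1]
    by_cases haj : a ∈ (Q j).coeff.support
    · rw [Finset.sum_ite_eq' _ a, if_pos haj]
    · rw [Finset.sum_ite_eq' _ a, if_neg haj,
        Finsupp.notMem_support_iff.mp haj, zero_mul]
  refine ⟨b, hlb, ?_⟩
  intro hzero
  apply hu
  have : (∑ i, (P i).coeff b • Q i).coeff a = 0 := by rw [hzero]; rfl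
  rw [MonoidAlgebra.coeff_sum, Finsupp.finset_sum_apply] at this
  calc ∑ i, (Q i * P i).coeff u = ∑ i, ((P i).coeff b • Q i).coeff a := by
        refine Finset.sum_congr rfl fun j _ => ?_
        rw [key j, MonoidAlgebra.coeff_smul_apply, smul_eq_mul, mul_comm]
    _ = 0 := this
end

section
/- Let f̂ = Σ_{i=1}^s ∏_{j=1}^{D₂} Q̂_{ij}, where each Q̂_{ij} is an s-ordered power-sum polynomial over noncommuting variables ξ₁,…,ξ_s, and suppose f̂ ≠ 0. Then there exists a subset I ⊆ [D₂] with |I| ≤ s−1 such that the polynomial obtained by replacing, in each factor Q̂_{ij} with j ∉ I, every noncommuting variable ξ_k by a commuting variable ζ_k (while keeping the factors with j ∈ I noncommutative) is still nonzero. -/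
/-- The inclusion `F⟨ξ⟩ → F[ζ]⟨ξ⟩` keeping the `ξ`-variables noncommutative. -/
noncomputable def keepNC (F : Type*) [Field F] (s : ℕ) :
    MonoidAlgebra F (FreeMonoid (Fin s)) →ₐ[F]
      MonoidAlgebra (MvPolynomial (Fin s) F) (FreeMonoid (Fin s)) :=
  ncEval fun i =>
    MonoidAlgebra.of (MvPolynomial (Fin s) F) (FreeMonoid (Fin s)) (FreeMonoid.of i)

/-- The abelianization `F⟨ξ⟩ → F[ζ] ⊆ F[ζ]⟨ξ⟩` replacing each noncommuting
variable `ξ_k` by the commuting variable `ζ_k`. -/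
noncomputable def makeComm (F : Type*) [Field F] (s : ℕ) :
    MonoidAlgebra F (FreeMonoid (Fin s)) →ₐ[F]
      MonoidAlgebra (MvPolynomial (Fin s) F) (FreeMonoid (Fin s)) :=
  ncEval fun i => MonoidAlgebra.single 1 (MvPolynomial.X i)


section Aux
variable {F : Type*} [Field F] {s : ℕ}

theorem ncEval_single {n : ℕ} {R : Type*} [Semiring R] [Algebra F R] (M : Fin n → R)
    (w : FreeMonoid (Fin n)) (c : F) :
    ncEval M (MonoidAlgebra.single w c) = c • FreeMonoid.lift M w := by
  simp [ncEval, MonoidAlgebra.lift_single]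

theorem keepNC_single (w : FreeMonoid (Fin s)) (c : F) :
    keepNC F s (MonoidAlgebra.single w c)
      = c • MonoidAlgebra.single w (1 : MvPolynomial (Fin s) F) := by
  rw [keepNC, ncEval_single]
  congr 1
  have : (FreeMonoid.lift fun i =>
      MonoidAlgebra.of (MvPolynomial (Fin s) F) (FreeMonoid (Fin s)) (FreeMonoid.of i))
      = MonoidAlgebra.of (MvPolynomial (Fin s) F) (FreeMonoid (Fin s)) :=
    FreeMonoid.hom_eq fun x => by simp
  rw [this, MonoidAlgebra.of_apply]

/-- The abelianization into `MvPolynomial`. -/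
noncomputable def toMv (F : Type*) [Field F] (s : ℕ) :
    MonoidAlgebra F (FreeMonoid (Fin s)) →ₐ[F] MvPolynomial (Fin s) F :=
  ncEval fun i => MvPolynomial.X i

theorem makeComm_eq (q : MonoidAlgebra F (FreeMonoid (Fin s))) :
    makeComm F s q = MonoidAlgebra.single 1 (toMv F s q) := by
  induction q using MonoidAlgebra.induction_linear with
  | zero => simp
  | add f g hf hg =>
      rw [map_add, map_add, hf, hg, ← MonoidAlgebra.single_add]
  | single w c =>
      rw [makeComm, toMv, ncEval_single, ncEval_single]
      have : (FreeMonoid.lift fun i =>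
          (MonoidAlgebra.single 1 (MvPolynomial.X i) :
            MonoidAlgebra (MvPolynomial (Fin s) F) (FreeMonoid (Fin s))))
          = (MonoidAlgebra.singleOneRingHom.toMonoidHom.comp
              (FreeMonoid.lift fun i => (MvPolynomial.X i : MvPolynomial (Fin s) F))) :=
        FreeMonoid.hom_eq fun x => by simp [MonoidAlgebra.singleOneRingHom]
      rw [this]
      simp only [MonoidHom.comp_apply, RingHom.toMonoidHom_eq_coe, MonoidHom.coe_coe,
        MonoidAlgebra.singleOneRingHom_apply]
      show c • MonoidAlgebra.single 1 _ = _
      exact MonoidAlgebra.smul_single _ _ _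

end Aux
section Aux2
variable {F : Type*} [Field F] {s : ℕ}
open scoped Classical

/-- multiset of letters of a list, as a Finsupp -/
noncomputable def cnt (l : List (Fin s)) : Fin s →₀ ℕ := Multiset.toFinsupp (l : Multiset (Fin s))

theorem cnt_inj {l l' : List (Fin s)} (hl : l.Pairwise (· ≤ ·)) (hl' : l'.Pairwise (· ≤ ·))
    (h : cnt l = cnt l') : l = l' := by
  have : (l : Multiset (Fin s)) = (l' : Multiset (Fin s)) :=
    Multiset.toFinsupp.injective h
  exact List.Perm.eq_of_pairwise' hl hl' (Multiset.coe_eq_coe.mp this)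

theorem mon_eq (l : List (Fin s)) :
    (l.map (MvPolynomial.X : Fin s → MvPolynomial (Fin s) F)).prod
      = MvPolynomial.monomial (cnt l) 1 := by
  induction l with
  | nil => simp [cnt]
  | cons a l ih =>
      rw [List.map_cons, List.prod_cons, ih]
      have hc : cnt (a :: l) = Finsupp.single a 1 + cnt l := by
        simp only [cnt]
        rw [show ((a :: l : List (Fin s)) : Multiset (Fin s)) = {a} + (l : Multiset (Fin s)) by
          simp, map_add, Multiset.toFinsupp_singleton]
      rw [hc, MvPolynomial.X, MvPolynomial.monomial_mul, one_mul]

theorem toMv_apply (q : MonoidAlgebra F (FreeMonoid (Fin s))) :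
    toMv F s q = ∑ w ∈ q.coeff.support, MvPolynomial.monomial (cnt (FreeMonoid.toList w)) (q.coeff w) := by
  conv_lhs => rw [← MonoidAlgebra.sum_coeff_single q]
  rw [Finsupp.sum, map_sum]
  refine Finset.sum_congr rfl fun w _ => ?_
  rw [toMv, ncEval_single, FreeMonoid.lift_apply, mon_eq, MvPolynomial.smul_monomial, smul_eq_mul,
    mul_one]

theorem toMv_ne_zero {q : MonoidAlgebra F (FreeMonoid (Fin s))}
    (hs : ∀ w ∈ q.coeff.support, (FreeMonoid.toList w).Pairwise (· ≤ ·)) (hq : q ≠ 0) :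
    toMv F s q ≠ 0 := by
  obtain ⟨w₀, hw₀⟩ := Finsupp.support_nonempty_iff.mpr (mt MonoidAlgebra.coeff_eq_zero.mp hq)
  have : MvPolynomial.coeff (cnt (FreeMonoid.toList w₀)) (toMv F s q) = q.coeff w₀ := by
    rw [toMv_apply]
    rw [MvPolynomial.coeff_sum]
    rw [Finset.sum_eq_single w₀]
    · simp [MvPolynomial.coeff_monomial]
    · intro w hw hne
      rw [MvPolynomial.coeff_monomial, if_neg, ]
      intro hcnt
      exact hne (FreeMonoid.toList.injective (cnt_inj (hs w hw) (hs w₀ hw₀) hcnt))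
    · intro h; exact absurd hw₀ h
  intro h0
  rw [h0, MvPolynomial.coeff_zero] at this
  exact (Finsupp.mem_support_iff.mp hw₀) this.symm

theorem single_one_mul_ne_zero {p : MvPolynomial (Fin s) F}
    {x : MonoidAlgebra (MvPolynomial (Fin s) F) (FreeMonoid (Fin s))}
    (hp : p ≠ 0) (hx : x ≠ 0) : MonoidAlgebra.single 1 p * x ≠ 0 := by
  obtain ⟨v, hv⟩ := Finsupp.support_nonempty_iff.mpr (mt MonoidAlgebra.coeff_eq_zero.mp hx)
  intro h0
  have := MonoidAlgebra.coeff_single_one_mul x p v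
  simp only [h0, MonoidAlgebra.coeff_zero, Finsupp.coe_zero, Pi.zero_apply] at this
  exact Finsupp.mem_support_iff.mp hv (by
    rcases mul_eq_zero.mp this.symm with h | h
    · exact absurd h hp
    · exact h)

theorem single_mul_eq (w : FreeMonoid (Fin s)) (p : MvPolynomial (Fin s) F)
    (x : MonoidAlgebra (MvPolynomial (Fin s) F) (FreeMonoid (Fin s))) :
    MonoidAlgebra.single w p * x = MonoidAlgebra.mapDomain (w * ·) (p • x) := by
  induction x using MonoidAlgebra.induction_linear with
  | zero => simp
  | add f g hf hg => rw [mul_add, smul_add, MonoidAlgebra.mapDomain_add, hf, hg]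
  | single b q =>
      rw [MonoidAlgebra.single_mul_single]
      rw [show p • (MonoidAlgebra.single b q
          : MonoidAlgebra (MvPolynomial (Fin s) F) (FreeMonoid (Fin s)))
          = MonoidAlgebra.single b (p * q) from MonoidAlgebra.smul_single' p b q]
      exact (MonoidAlgebra.mapDomain_single).symm

end Aux2
section Aux3
variable {F : Type*} [Field F] {s : ℕ}

theorem extract_zero {D₁ : ℕ} {W : Finset (FreeMonoid (Fin s))}
    (hlen : ∀ w ∈ W, (FreeMonoid.toList w).length = D₁)
    (y : FreeMonoid (Fin s) → MonoidAlgebra (MvPolynomial (Fin s) F) (FreeMonoid (Fin s)))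
    (h : ∑ w ∈ W, MonoidAlgebra.single w (1 : MvPolynomial (Fin s) F) * y w = 0) :
    ∀ w ∈ W, y w = 0 := by
  classical
  intro w hw
  refine MonoidAlgebra.ext (Finsupp.ext fun v => ?_)
  have h2 := congrArg (fun z : MonoidAlgebra (MvPolynomial (Fin s) F) (FreeMonoid (Fin s)) =>
    z.coeff (w * v)) h
  simp only [MonoidAlgebra.coeff_zero, Finsupp.coe_zero, Pi.zero_apply] at h2
  rw [MonoidAlgebra.coeff_sum, Finsupp.finset_sum_apply] at h2
  have key : ∀ w' ∈ W,
      (MonoidAlgebra.single w' (1 : MvPolynomial (Fin s) F) * y w').coeff (w * v)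
        = if w' = w then (y w).coeff v else 0 := by
    intro w' hw'
    rw [single_mul_eq, one_smul, MonoidAlgebra.coeff_mapDomain]
    by_cases hww : w' = w
    · subst hww
      rw [if_pos rfl, Finsupp.mapDomain_apply (mul_right_injective w')]
    · rw [if_neg hww, Finsupp.mapDomain_notin_range]
      rintro ⟨u, hu⟩
      apply hww
      have hlist := congrArg FreeMonoid.toList hu
      rw [FreeMonoid.toList_mul, FreeMonoid.toList_mul] at hlist
      have hl : (FreeMonoid.toList w').length = (FreeMonoid.toList w).length := by
        rw [hlen w' hw', hlen w hw]
      exact FreeMonoid.toList.injective (List.append_inj hlist hl).1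
  rw [Finset.sum_congr rfl key, Finset.sum_ite_eq' W w (fun _ => (y w).coeff v), if_pos hw] at h2
  simpa using h2

theorem gen_decomp {R : Type*} [Ring R] [Algebra F R] {ι κ : Type*}
    (S : Finset ι) (W : Finset κ) (a : ι → κ → F) (c : ι → F) (e : κ → R) (t : ι → R) :
    ∑ i ∈ S, c i • ((∑ w ∈ W, a i w • e w) * t i)
      = ∑ w ∈ W, e w * (∑ i ∈ S, (c i * a i w) • t i) := by
  have lhs : ∀ i, c i • ((∑ w ∈ W, a i w • e w) * t i)
      = ∑ w ∈ W, (c i * a i w) • (e w * t i) := by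
    intro i
    rw [Finset.sum_mul, Finset.smul_sum]
    refine Finset.sum_congr rfl fun w _ => ?_
    rw [smul_mul_assoc, smul_smul]
  rw [Finset.sum_congr rfl fun i _ => lhs i, Finset.sum_comm]
  refine Finset.sum_congr rfl fun w _ => ?_
  rw [Finset.mul_sum]
  refine Finset.sum_congr rfl fun i _ => ?_
  rw [mul_smul_comm]

/-- `v ↦ ∑ i in S, v i • t i` as a linear map. -/
noncomputable def sumSmul {ι : Type*} {M : Type*} [AddCommGroup M] [Module F M]
    (S : Finset ι) (t : ι → M) : (ι → F) →ₗ[F] M :=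
  ∑ i ∈ S, LinearMap.smulRight (LinearMap.proj i) (t i)

theorem sumSmul_apply {ι : Type*} {M : Type*} [AddCommGroup M] [Module F M]
    (S : Finset ι) (t : ι → M) (v : ι → F) :
    sumSmul S t v = ∑ i ∈ S, v i • t i := by
  simp [sumSmul, LinearMap.sum_apply]

theorem drop_cons {D₂ r : ℕ} (h : r + 1 ≤ D₂) :
    (List.finRange D₂).drop (D₂ - (r + 1))
      = (⟨D₂ - (r + 1), by omega⟩ : Fin D₂) :: (List.finRange D₂).drop (D₂ - r) := by
  rw [List.drop_eq_getElem_cons (by rw [List.length_finRange]; omega)]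
  congr 1
  · simp [List.getElem_finRange]
  · congr 1
    omega

theorem mem_drop_ge {D₂ k : ℕ} {j : Fin D₂} (hj : j ∈ (List.finRange D₂).drop k) :
    k ≤ (j : ℕ) := by
  rw [List.mem_iff_getElem] at hj
  obtain ⟨i, hi, hEq⟩ := hj
  rw [List.getElem_drop] at hEq
  rw [← hEq]
  simp [List.getElem_finRange]

end Aux3
section Main
variable {F : Type*} [Field F] {s D₁ D₂ : ℕ}

/-- product of the last `r` factors -/
noncomputable def tp (Q : Fin s → Fin D₂ → MonoidAlgebra F (FreeMonoid (Fin s)))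
    (i : Fin s) (r : ℕ) : MonoidAlgebra F (FreeMonoid (Fin s)) :=
  (((List.finRange D₂).drop (D₂ - r)).map fun j => Q i j).prod

/-- sparsified product of the last `r` factors -/
noncomputable def spT (Q : Fin s → Fin D₂ → MonoidAlgebra F (FreeMonoid (Fin s)))
    (I : Finset (Fin D₂)) (i : Fin s) (r : ℕ) :
    MonoidAlgebra (MvPolynomial (Fin s) F) (FreeMonoid (Fin s)) :=
  (((List.finRange D₂).drop (D₂ - r)).map fun j =>
    if j ∈ I then keepNC F s (Q i j) else makeComm F s (Q i j)).prod

theorem tp_zero (Q : Fin s → Fin D₂ → MonoidAlgebra F (FreeMonoid (Fin s))) (i : Fin s) :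
    tp Q i 0 = 1 := by
  rw [tp, Nat.sub_zero, List.drop_eq_nil_of_le (by simp), List.map_nil, List.prod_nil]

theorem spT_zero (Q : Fin s → Fin D₂ → MonoidAlgebra F (FreeMonoid (Fin s)))
    (I : Finset (Fin D₂)) (i : Fin s) : spT Q I i 0 = 1 := by
  rw [spT, Nat.sub_zero, List.drop_eq_nil_of_le (by simp), List.map_nil, List.prod_nil]

theorem tp_succ (Q : Fin s → Fin D₂ → MonoidAlgebra F (FreeMonoid (Fin s)))
    (i : Fin s) {r : ℕ} (h : r + 1 ≤ D₂) :
    tp Q i (r + 1) = Q i ⟨D₂ - (r + 1), by omega⟩ * tp Q i r := by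
  rw [tp, drop_cons h, List.map_cons, List.prod_cons]; rfl

theorem spT_succ (Q : Fin s → Fin D₂ → MonoidAlgebra F (FreeMonoid (Fin s)))
    (I : Finset (Fin D₂)) (i : Fin s) {r : ℕ} (h : r + 1 ≤ D₂) :
    spT Q I i (r + 1)
      = (if (⟨D₂ - (r + 1), by omega⟩ : Fin D₂) ∈ I
          then keepNC F s (Q i ⟨D₂ - (r + 1), by omega⟩)
          else makeComm F s (Q i ⟨D₂ - (r + 1), by omega⟩)) * spT Q I i r := by
  rw [spT, drop_cons h, List.map_cons, List.prod_cons]; rfl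

theorem spT_congr (Q : Fin s → Fin D₂ → MonoidAlgebra F (FreeMonoid (Fin s)))
    {I I' : Finset (Fin D₂)} (i : Fin s) {r : ℕ}
    (hagree : ∀ j : Fin D₂, D₂ - r ≤ (j : ℕ) → (j ∈ I ↔ j ∈ I')) :
    spT Q I i r = spT Q I' i r := by
  rw [spT, spT]
  congr 1
  refine List.map_congr_left fun j hj => ?_
  have hb := mem_drop_ge hj
  by_cases hmem : j ∈ I
  · rw [if_pos hmem, if_pos ((hagree j hb).mp hmem)]
  · rw [if_neg hmem, if_neg (fun h => hmem ((hagree j hb).mpr h))]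

theorem finsupp_decomp {M : Type*} [CommSemiring M]
    (q : MonoidAlgebra M (FreeMonoid (Fin s))) {W : Finset (FreeMonoid (Fin s))}
    (hsub : q.coeff.support ⊆ W) :
    q = ∑ w ∈ W, q.coeff w • MonoidAlgebra.single w (1 : M) := by
  classical
  rw [← Finset.sum_subset hsub
    (fun w _ hw => by rw [Finsupp.notMem_support_iff.mp hw, zero_smul])]
  have h1 : q = ∑ w ∈ q.coeff.support, MonoidAlgebra.single w (q.coeff w) :=
    (MonoidAlgebra.sum_coeff_single q).symm
  conv_lhs => rw [h1]
  exact Finset.sum_congr rfl fun w _ => by rw [MonoidAlgebra.smul_single', mul_one]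

theorem main (Q : Fin s → Fin D₂ → MonoidAlgebra F (FreeMonoid (Fin s)))
    (hord : ∀ i j, ∀ w ∈ (Q i j).coeff.support,
      (FreeMonoid.toList w).Pairwise (· ≤ ·) ∧ (FreeMonoid.toList w).length = D₁) :
    ∀ (t r : ℕ), r ≤ D₂ → ∀ (S : Finset (Fin s)) (c : Fin s → F),
      S.card ≤ t → (∑ i ∈ S, c i • tp Q i r) ≠ 0 →
      ∃ I : Finset (Fin D₂), (∀ j ∈ I, D₂ - r ≤ (j : ℕ)) ∧ I.card ≤ t - 1 ∧
        (∑ i ∈ S, c i • spT Q I i r) ≠ 0 := by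
  classical
  intro t
  induction t with
  | zero =>
      intro r hr S c hS hne
      rw [Finset.card_eq_zero.mp (Nat.le_zero.mp hS)] at hne
      simp at hne
  | succ t ih =>
      intro r
      induction r with
      | zero =>
          intro _ S c _ hne
          have h1 : (∑ i ∈ S, c i) ≠ 0 := by
            intro h0
            apply hne
            simp only [tp_zero, ← Finset.sum_smul, h0, zero_smul]
          refine ⟨∅, by simp, by simp, ?_⟩
          simp only [spT_zero, ← Finset.sum_smul]
          intro h0
          apply h1
          have := MonoidAlgebra.single_eq_zero.mp (by
            rw [show ((∑ i ∈ S, c i) •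
                (1 : MonoidAlgebra (MvPolynomial (Fin s) F) (FreeMonoid (Fin s))))
              = MonoidAlgebra.single 1 ((∑ i ∈ S, c i) • (1 : MvPolynomial (Fin s) F)) from
                MonoidAlgebra.smul_single _ _ _] at h0
            exact h0)
          rcases smul_eq_zero.mp this with h | h
          · exact h
          · exact absurd h one_ne_zero
      | succ r ihr =>
          intro hr1 S c hS hne
          have hr' : r ≤ D₂ := by omega
          set j' : Fin D₂ := ⟨D₂ - (r + 1), by omega⟩ with hj'
          by_cases hzero : ∃ i ∈ S, c i = 0
          · obtain ⟨i0, hi0S, hci0⟩ := hzero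
            have hcard : (S.erase i0).card ≤ t := by
              rw [Finset.card_erase_of_mem hi0S]; omega
            have heq0 := Finset.sum_erase (f := fun i => c i • tp Q i (r + 1)) S
              (a := i0) (by simp [hci0])
            have hsum : (∑ i ∈ S.erase i0, c i • tp Q i (r + 1)) ≠ 0 := by
              rw [heq0]; exact hne
            obtain ⟨I, hIsuf, hIcard, hIne⟩ := ih (r + 1) hr1 (S.erase i0) c hcard hsum
            refine ⟨I, hIsuf, by omega, ?_⟩
            rw [← Finset.sum_erase (f := fun i => c i • spT Q I i (r + 1)) S
              (a := i0) (by simp [hci0])]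
            exact hIne
          · push_neg at hzero
            by_cases hA : ∃ (R : MonoidAlgebra F (FreeMonoid (Fin s))) (μ : Fin s → F),
                ∀ i ∈ S, Q i j' = μ i • R
            · -- Case A : all first factors proportional
              obtain ⟨R, μ, hQR⟩ := hA
              have hsum0 : ¬(∀ i ∈ S, Q i j' = 0) := by
                intro hall
                apply hne
                refine Finset.sum_eq_zero fun i hi => ?_
                rw [tp_succ Q i hr1, show Q i ⟨D₂ - (r+1), by omega⟩ = 0 from hall i hi,
                  zero_mul, smul_zero]
              have hRne : R ≠ 0 := by
                intro h0
                exact hsum0 fun i hi => by rw [hQR i hi, h0, smul_zero]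
              have hμ : ∃ i₀ ∈ S, μ i₀ ≠ 0 := by
                by_contra hno
                push_neg at hno
                exact hsum0 fun i hi => by rw [hQR i hi, hno i hi, zero_smul]
              obtain ⟨i₀, hi₀S, hμ₀⟩ := hμ
              set R' := Q i₀ j' with hR'def
              have hR'ne : R' ≠ 0 := by
                rw [hR'def, hQR i₀ hi₀S]
                exact smul_ne_zero hμ₀ hRne
              have hR' : ∀ i ∈ S, Q i j' = (μ i / μ i₀) • R' := by
                intro i hi
                rw [hR'def, hQR i hi, hQR i₀ hi₀S, smul_smul, div_mul_cancel₀ _ hμ₀]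
              have h' : (∑ i ∈ S, (c i * (μ i / μ i₀)) • tp Q i r) ≠ 0 := by
                intro h0
                apply hne
                calc ∑ i ∈ S, c i • tp Q i (r + 1)
                    = R' * ∑ i ∈ S, (c i * (μ i / μ i₀)) • tp Q i r := by
                      rw [Finset.mul_sum]
                      refine Finset.sum_congr rfl fun i hi => ?_
                      rw [tp_succ Q i hr1, show Q i ⟨D₂ - (r+1), by omega⟩
                          = (μ i / μ i₀) • R' from hR' i hi,
                        smul_mul_assoc, smul_smul, mul_smul_comm]
                  _ = 0 := by rw [h0, mul_zero]
              obtain ⟨I, hIsuf, hIcard, hIne⟩ :=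
                ihr hr' S (fun i => c i * (μ i / μ i₀)) hS h'
              have hjI : j' ∉ I := by
                intro hmem
                have := hIsuf j' hmem
                simp only [hj'] at this
                omega
              refine ⟨I, fun j hj => by have := hIsuf j hj; omega, hIcard, ?_⟩
              have hp : toMv F s R' ≠ 0 :=
                toMv_ne_zero (fun w hw => (hord i₀ j' w hw).1) hR'ne
              intro h0
              apply single_one_mul_ne_zero hp hIne
              rw [← h0, Finset.mul_sum]
              refine (Finset.sum_congr rfl fun i hi => ?_).symm
              rw [spT_succ Q I i hr1, if_neg (show (⟨D₂ - (r+1), by omega⟩ : Fin D₂) ∉ I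
                from hjI), show Q i ⟨D₂ - (r+1), by omega⟩ = (μ i / μ i₀) • R' from hR' i hi,
                map_smul, makeComm_eq, smul_mul_assoc, smul_smul, mul_smul_comm]
            · -- Case B
              have hS2 : 2 ≤ S.card := by
                by_contra hlt
                push_neg at hlt
                interval_cases h : S.card
                · exact hA ⟨0, 0, fun i hi => by
                    rw [Finset.card_eq_zero.mp h] at hi; exact absurd hi (by simp)⟩
                · obtain ⟨i₀, hi₀⟩ := Finset.card_eq_one.mp h
                  exact hA ⟨Q i₀ j', fun _ => 1, fun i hi => by
                    rw [hi₀, Finset.mem_singleton] at hi; rw [hi, one_smul]⟩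
              have ht1 : 1 ≤ t := by omega
              have hSne : S.Nonempty := Finset.card_pos.mp (by omega)
              set W : Finset (FreeMonoid (Fin s)) := S.biUnion (fun i => (Q i j').coeff.support)
                with hWdef
              set u : FreeMonoid (Fin s) → Fin s → F :=
                fun w i => if i ∈ S then c i * (Q i j').coeff w else 0 with hudef
              set Φ : (Fin s → F) →ₗ[F] MonoidAlgebra F (FreeMonoid (Fin s)) :=
                sumSmul S (fun i => tp Q i r) with hΦdef
              have hsubW : ∀ i ∈ S, (Q i j').coeff.support ⊆ W :=
                fun i hi => Finset.subset_biUnion_of_mem (fun i => (Q i j').coeff.support) hi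
              have hQdec : ∀ i ∈ S, Q i j'
                  = ∑ w ∈ W, ((Q i j').coeff w) • MonoidAlgebra.single w (1 : F) :=
                fun i hi => finsupp_decomp (Q i j') (hsubW i hi)
              have hdec : ∑ i ∈ S, c i • tp Q i (r + 1)
                  = ∑ w ∈ W, MonoidAlgebra.single w (1 : F) * Φ (u w) := by
                calc ∑ i ∈ S, c i • tp Q i (r + 1)
                    = ∑ i ∈ S, c i • ((∑ w ∈ W, ((Q i j').coeff w) •
                        MonoidAlgebra.single w (1 : F)) * tp Q i r) := by
                      refine Finset.sum_congr rfl fun i hi => ?_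
                      rw [tp_succ Q i hr1, ← hQdec i hi]
                  _ = ∑ w ∈ W, MonoidAlgebra.single w (1 : F) *
                        (∑ i ∈ S, (c i * (Q i j').coeff w) • tp Q i r) :=
                      gen_decomp S W _ c _ _
                  _ = ∑ w ∈ W, MonoidAlgebra.single w (1 : F) * Φ (u w) := by
                      refine Finset.sum_congr rfl fun w _ => ?_
                      congr 1
                      rw [hΦdef, sumSmul_apply]
                      exact (Finset.sum_congr rfl fun i hi => by
                        simp [hudef, hi]).symm
              have hw₀ : ∃ w₀, Φ (u w₀) ≠ 0 := by
                by_contra hall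
                push_neg at hall
                apply hne
                rw [hdec]
                exact Finset.sum_eq_zero fun w _ => by rw [hall w, mul_zero]
              have key : ∃ v : Fin s → F, v ∈ Submodule.span F (Set.range u) ∧
                  (∃ i ∈ S, v i = 0) ∧ Φ v ≠ 0 := by
                obtain ⟨w₀, hΦ₀⟩ := hw₀
                set u₀ := u w₀ with hu₀
                have hu₀app : ∀ i ∈ S, u₀ i = c i * (Q i j').coeff w₀ := by
                  intro i hi; simp [hu₀, hudef, hi]
                have huapp : ∀ w, ∀ i ∈ S, u w i = c i * (Q i j').coeff w := by
                  intro w i hi; simp [hudef, hi]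
                have huoff : ∀ w, ∀ i, i ∉ S → u w i = 0 := by
                  intro w i hi; simp [hudef, hi]
                by_cases hz : ∃ i ∈ S, u₀ i = 0
                · exact ⟨u₀, Submodule.subset_span ⟨w₀, rfl⟩, hz, hΦ₀⟩
                push_neg at hz
                by_cases hP : ∀ w, ∃ l : F, u w = l • u₀
                · exfalso
                  obtain ⟨ia, hia⟩ := hSne
                  have hQa : (Q ia j').coeff w₀ ≠ 0 := by
                    intro hq0
                    apply hz ia hia
                    rw [hu₀app ia hia, hq0, mul_zero]
                  refine hA ⟨Q ia j', fun i => (Q i j').coeff w₀ / (Q ia j').coeff w₀, fun i hi => ?_⟩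
                  refine MonoidAlgebra.ext (Finsupp.ext fun w => ?_)
                  obtain ⟨l, hl⟩ := hP w
                  have hcoord : ∀ i' ∈ S, c i' * (Q i' j').coeff w = l * (c i' * (Q i' j').coeff w₀) := by
                    intro i' hi'
                    have h := congrFun hl i'
                    rwa [huapp w i' hi', Pi.smul_apply, smul_eq_mul, hu₀app i' hi'] at h
                  have h1 : (Q i j').coeff w = l * (Q i j').coeff w₀ :=
                    mul_left_cancel₀ (hzero i hi) (by rw [hcoord i hi]; ring)
                  have h2 : (Q ia j').coeff w = l * (Q ia j').coeff w₀ :=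
                    mul_left_cancel₀ (hzero ia hia) (by rw [hcoord ia hia]; ring)
                  rw [MonoidAlgebra.coeff_smul, Finsupp.smul_apply, smul_eq_mul, h1, h2]
                  field_simp
                · push_neg at hP
                  obtain ⟨w₁, hw₁⟩ := hP
                  set u₁ := u w₁ with hu₁
                  by_cases hv : ∃ i ∈ S, Φ (u₁ - (u₁ i / u₀ i) • u₀) ≠ 0
                  · obtain ⟨i, hiS, hΦv⟩ := hv
                    refine ⟨u₁ - (u₁ i / u₀ i) • u₀,
                      Submodule.sub_mem _ (Submodule.subset_span ⟨w₁, rfl⟩)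
                        (Submodule.smul_mem _ _ (Submodule.subset_span ⟨w₀, rfl⟩)),
                      ⟨i, hiS, ?_⟩, hΦv⟩
                    simp only [Pi.sub_apply, Pi.smul_apply, smul_eq_mul]
                    rw [div_mul_cancel₀ _ (hz i hiS), sub_self]
                  · exfalso
                    push_neg at hv
                    have hratio : ∀ i ∈ S, Φ u₁ = (u₁ i / u₀ i) • Φ u₀ := by
                      intro i hi
                      have := hv i hi
                      rwa [map_sub, map_smul, sub_eq_zero] at this
                    obtain ⟨i₂, hi₂⟩ := hSne
                    set l := u₁ i₂ / u₀ i₂ with hldef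
                    apply hw₁ l
                    funext i
                    show u₁ i = l * u₀ i
                    by_cases hiS : i ∈ S
                    · have heq : u₁ i / u₀ i = l := by
                        have h1 := hratio i hiS
                        have h2 := hratio i₂ hi₂
                        have h3 : (u₁ i / u₀ i - l) • Φ u₀ = 0 := by
                          rw [sub_smul, ← h1, hldef, ← h2, sub_self]
                        rcases smul_eq_zero.mp h3 with h | h
                        · exact sub_eq_zero.mp h
                        · exact absurd h hΦ₀
                      rw [← heq, div_mul_cancel₀ _ (hz i hiS)]
                    · have e1 : u₁ i = 0 := by rw [hu₁]; exact huoff w₁ i hiS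
                      have e2 : u₀ i = 0 := by rw [hu₀]; exact huoff w₀ i hiS
                      rw [e1, e2, mul_zero]
              obtain ⟨v, hvspan, ⟨i₁, hi₁S, hvi₁⟩, hΦv⟩ := key
              have hv' : (∑ i ∈ S.erase i₁, v i • tp Q i r) ≠ 0 := by
                intro h0
                apply hΦv
                rw [hΦdef, sumSmul_apply, ← Finset.sum_erase
                  (f := fun i => v i • tp Q i r) S (a := i₁) (by simp [hvi₁]), h0]
              have hcard' : (S.erase i₁).card ≤ t := by
                rw [Finset.card_erase_of_mem hi₁S]; omega
              obtain ⟨I', hI'suf, hI'card, hI'ne⟩ := ih r hr' (S.erase i₁) v hcard' hv'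
              have hjI' : j' ∉ I' := by
                intro hmem
                have := hI'suf j' hmem
                simp only [hj'] at this
                omega
              refine ⟨insert j' I', ?_, ?_, ?_⟩
              · intro j hj
                rcases Finset.mem_insert.mp hj with h | h
                · rw [h, hj']
                · have := hI'suf j h; omega
              · rw [Finset.card_insert_of_notMem hjI']
                omega
              · -- sparsified sum nonzero
                intro h0
                set Ψ : (Fin s → F) →ₗ[F]
                    MonoidAlgebra (MvPolynomial (Fin s) F) (FreeMonoid (Fin s)) :=
                  sumSmul S (fun i => spT Q I' i r) with hΨdef
                have hlen : ∀ w ∈ W, (FreeMonoid.toList w).length = D₁ := by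
                  intro w hw
                  obtain ⟨i, hiS, hwsupp⟩ := Finset.mem_biUnion.mp hw
                  exact (hord i j' w hwsupp).2
                have hdecA : ∑ i ∈ S, c i • spT Q (insert j' I') i (r + 1)
                    = ∑ w ∈ W, MonoidAlgebra.single w (1 : MvPolynomial (Fin s) F)
                        * Ψ (u w) := by
                  calc ∑ i ∈ S, c i • spT Q (insert j' I') i (r + 1)
                      = ∑ i ∈ S, c i • ((∑ w ∈ W, ((Q i j').coeff w) •
                          MonoidAlgebra.single w (1 : MvPolynomial (Fin s) F))
                          * spT Q I' i r) := by
                        refine Finset.sum_congr rfl fun i hi => ?_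
                        rw [spT_succ Q (insert j' I') i hr1,
                          if_pos (show (⟨D₂ - (r+1), by omega⟩ : Fin D₂) ∈ insert j' I'
                            from Finset.mem_insert_self j' I'),
                          spT_congr Q i (I := insert j' I') (I' := I')
                            (fun j hjb => by
                              constructor
                              · intro hmem
                                rcases Finset.mem_insert.mp hmem with h | h
                                · exfalso; rw [h] at hjb; simp only [hj'] at hjb; omega
                                · exact h
                              · exact fun h => Finset.mem_insert_of_mem h)]
                        congr 2
                        have := congrArg (keepNC F s) (hQdec i hi)
                        rw [map_sum] at this
                        rw [show Q i (⟨D₂ - (r+1), by omega⟩ : Fin D₂) = Q i j' from rfl, this]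
                        refine Finset.sum_congr rfl fun w _ => ?_
                        rw [map_smul, keepNC_single, one_smul]
                    _ = ∑ w ∈ W, MonoidAlgebra.single w (1 : MvPolynomial (Fin s) F) *
                          (∑ i ∈ S, (c i * (Q i j').coeff w) • spT Q I' i r) :=
                        gen_decomp S W _ c _ _
                    _ = ∑ w ∈ W, MonoidAlgebra.single w (1 : MvPolynomial (Fin s) F)
                          * Ψ (u w) := by
                        refine Finset.sum_congr rfl fun w _ => ?_
                        congr 1
                        rw [hΨdef, sumSmul_apply]
                        exact (Finset.sum_congr rfl fun i hi => by
                          simp [hudef, hi]).symm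
                have hzeroW : ∀ w ∈ W, Ψ (u w) = 0 :=
                  extract_zero hlen (fun w => Ψ (u w)) (by rw [← hdecA]; exact h0)
                have hzeroAll : ∀ w, Ψ (u w) = 0 := by
                  intro w
                  by_cases hw : w ∈ W
                  · exact hzeroW w hw
                  · have : u w = 0 := by
                      funext i
                      rw [hudef]
                      by_cases hiS : i ∈ S
                      · simp only [if_pos hiS]
                        rw [Finsupp.notMem_support_iff.mp
                          (fun hmem => hw (hsubW i hiS hmem)), mul_zero]
                        rfl
                      · simp only [if_neg hiS]; rfl
                    rw [this, map_zero]
                have hΨv : Ψ v = 0 := by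
                  have hsub : Set.range u ⊆ (LinearMap.ker Ψ : Set (Fin s → F)) := by
                    rintro x ⟨w, rfl⟩
                    exact hzeroAll w
                  have := Submodule.span_le.mpr hsub hvspan
                  exact this
                apply hI'ne
                have : Ψ v = ∑ i ∈ S.erase i₁, v i • spT Q I' i r := by
                  rw [hΨdef, sumSmul_apply,
                    ← Finset.sum_erase (f := fun i => v i • spT Q I' i r) S
                      (a := i₁) (by simp [hvi₁])]
                rw [← this, hΨv]

end Main

/-- Product Sparsification Lemma: if `f̂ = Σ_{i∈[s]} ∏_{j∈[D₂]} Q̂_{ij} ≠ 0`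
where each `Q̂_{ij}` is an `s`-ordered power-sum polynomial (homogeneous of
degree `D₁`), then there is `I ⊆ [D₂]` with `|I| ≤ s−1` such that keeping the
factors with `j ∈ I` noncommutative and replacing each `ξ_k` by the commuting
`ζ_k` in the remaining factors still yields a nonzero polynomial. -/
theorem stmt13 {F : Type*} [Field F] {s D₁ D₂ : ℕ}
    (Q : Fin s → Fin D₂ → MonoidAlgebra F (FreeMonoid (Fin s)))
    (hord : ∀ i j, ∀ w ∈ (Q i j).coeff.support,
      (FreeMonoid.toList w).Pairwise (· ≤ ·) ∧ (FreeMonoid.toList w).length = D₁)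
    (hne : (∑ i, (List.ofFn fun j => Q i j).prod) ≠ 0) :
    ∃ I : Finset (Fin D₂), I.card ≤ s - 1 ∧
      (∑ i, (List.ofFn fun j =>
        if j ∈ I then keepNC F s (Q i j) else makeComm F s (Q i j)).prod) ≠ 0 := by
  classical
  have htp : ∀ i, tp Q i D₂ = (List.ofFn fun j => Q i j).prod := by
    intro i; rw [tp, Nat.sub_self, List.drop_zero, List.ofFn_eq_map]
  have hspT : ∀ (I : Finset (Fin D₂)) i, spT Q I i D₂
      = (List.ofFn fun j =>
          if j ∈ I then keepNC F s (Q i j) else makeComm F s (Q i j)).prod := by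
    intro I i; rw [spT, Nat.sub_self, List.drop_zero, List.ofFn_eq_map]
  have h1 : (∑ i, (1 : F) • tp Q i D₂) ≠ 0 := by
    simp only [one_smul, htp]; exact hne
  obtain ⟨I, _, hIcard, hIne⟩ := main Q hord s D₂ le_rfl Finset.univ (fun _ => 1)
    (by simp) h1
  refine ⟨I, hIcard, ?_⟩
  simp only [one_smul, hspT] at hIne
  exact hIne
end

section
/- Let f = Σ_{i=1}^s ∏_{j=1}^{D₂} Q_{ij} be a nonzero homogeneous noncommutative polynomial in F⟨X⟩, where each Q_{ij} is homogeneous of degree D₁ and suppose each Q_{ij} can be transformed, by a fixed F-linear injective-on-monomials substitution τ (the same τ for all i,j, replacing each Q_{ij} by a nonzero polynomial Q̂_{ij} over new variables such that Q_{ij} ≠ 0 implies Q̂_{ij} ≠ 0 and linear relations Σ_i c_i Q_{i,j} = 0 hold iff Σ_i c_i Q̂_{i,j} = 0). Then f̂ := Σ_{i=1}^s ∏_{j=1}^{D₂} Q̂_{ij} is nonzero. -/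
/-- Block substitution: apply `σ` to successive blocks of length `D₁`. -/
def stmt18.Tmap {n n' : ℕ} (σ : FreeMonoid (Fin n) → FreeMonoid (Fin n')) (D₁ : ℕ) :
    ℕ → FreeMonoid (Fin n) → FreeMonoid (Fin n')
  | 0, _ => 1
  | k + 1, w =>
      σ (FreeMonoid.ofList ((FreeMonoid.toList w).take D₁)) *
        stmt18.Tmap σ D₁ k (FreeMonoid.ofList ((FreeMonoid.toList w).drop D₁))

namespace stmt18aux

open FreeMonoid Finsupp

variable {F : Type*} [Field F] {n n' D₁ D' : ℕ}

/-- `mapDomain`, typed as a map of monoid algebras. -/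
noncomputable def tau (g : FreeMonoid (Fin n) → FreeMonoid (Fin n'))
    (p : MonoidAlgebra F (FreeMonoid (Fin n))) : MonoidAlgebra F (FreeMonoid (Fin n')) :=
  MonoidAlgebra.mapDomain g p

theorem tau_single (g : FreeMonoid (Fin n) → FreeMonoid (Fin n')) (a : FreeMonoid (Fin n))
    (b : F) : tau g (MonoidAlgebra.single a b) = MonoidAlgebra.single (g a) b :=
  MonoidAlgebra.mapDomain_single

theorem tau_sum (g : FreeMonoid (Fin n) → FreeMonoid (Fin n'))
    (s : MonoidAlgebra F (FreeMonoid (Fin n)))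
    (v : FreeMonoid (Fin n) → F → MonoidAlgebra F (FreeMonoid (Fin n))) :
    tau g (s.coeff.sum v) = s.coeff.sum fun a b => tau g (v a b) :=
  MonoidAlgebra.mapDomain_sum _ _ _

theorem tau_finset_sum {ι : Type*} (g : FreeMonoid (Fin n) → FreeMonoid (Fin n'))
    (s : Finset ι) (h : ι → MonoidAlgebra F (FreeMonoid (Fin n))) :
    tau g (∑ i ∈ s, h i) = ∑ i ∈ s, tau g (h i) := by
  classical
  induction s using Finset.induction_on with
  | empty => simp [tau]
  | insert a s ha ih =>
    rw [Finset.sum_insert ha, Finset.sum_insert ha, ← ih]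
    exact MonoidAlgebra.mapDomain_add _ _ _

variable (σ : FreeMonoid (Fin n) → FreeMonoid (Fin n'))

theorem Tmap_mul (k : ℕ) (w v : FreeMonoid (Fin n))
    (hw : (FreeMonoid.toList w).length = D₁) :
    stmt18.Tmap σ D₁ (k + 1) (w * v) = σ w * stmt18.Tmap σ D₁ k v := by
  have h1 : (FreeMonoid.toList (w * v)).take D₁ = FreeMonoid.toList w := by
    rw [FreeMonoid.toList_mul, List.take_left' hw]
  have h2 : (FreeMonoid.toList (w * v)).drop D₁ = FreeMonoid.toList v := by
    rw [FreeMonoid.toList_mul, List.drop_left' hw]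
  simp only [stmt18.Tmap, FreeMonoid.toList_mul] at *
  rw [h1, h2]
  simp

theorem Tmap_length (hσlen : ∀ w : FreeMonoid (Fin n), (FreeMonoid.toList w).length = D₁ →
      (FreeMonoid.toList (σ w)).length = D') :
    ∀ (k : ℕ) (w : FreeMonoid (Fin n)), (FreeMonoid.toList w).length = k * D₁ →
      (FreeMonoid.toList (stmt18.Tmap σ D₁ k w)).length = k * D' := by
  intro k
  induction k with
  | zero => intro w _; simp [stmt18.Tmap]
  | succ k ih =>
    intro w hw
    have hle : D₁ ≤ (k + 1) * D₁ := Nat.le_mul_of_pos_left D₁ (Nat.succ_pos k)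
    have htake : ((FreeMonoid.toList w).take D₁).length = D₁ := by
      rw [List.length_take, hw, min_eq_left hle]
    have hdrop : ((FreeMonoid.toList w).drop D₁).length = k * D₁ := by
      rw [List.length_drop, hw, Nat.succ_mul, Nat.add_sub_cancel]
    simp only [stmt18.Tmap, FreeMonoid.toList_mul, List.length_append]
    rw [hσlen _ (by simpa using htake), ih _ (by simpa using hdrop)]
    ring

theorem Tmap_injOn (hσinj : Function.Injective σ)
    (hσlen : ∀ w : FreeMonoid (Fin n), (FreeMonoid.toList w).length = D₁ →
      (FreeMonoid.toList (σ w)).length = D') :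
    ∀ k : ℕ, Set.InjOn (stmt18.Tmap σ D₁ k)
      {w : FreeMonoid (Fin n) | (FreeMonoid.toList w).length = k * D₁} := by
  intro k
  induction k with
  | zero =>
    intro w hw v hv _
    simp only [Set.mem_setOf_eq, Nat.zero_mul, List.length_eq_zero_iff] at hw hv
    have : FreeMonoid.toList w = FreeMonoid.toList v := hw.trans hv.symm
    exact FreeMonoid.toList.injective this
  | succ k ih =>
    intro w hw v hv heq
    simp only [Set.mem_setOf_eq] at hw hv
    simp only [stmt18.Tmap] at heq
    have hle : D₁ ≤ (k + 1) * D₁ := Nat.le_mul_of_pos_left D₁ (Nat.succ_pos k)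
    have hwt : ((FreeMonoid.toList w).take D₁).length = D₁ := by
      rw [List.length_take, hw, min_eq_left hle]
    have hvt : ((FreeMonoid.toList v).take D₁).length = D₁ := by
      rw [List.length_take, hv, min_eq_left hle]
    have hwd : ((FreeMonoid.toList w).drop D₁).length = k * D₁ := by
      rw [List.length_drop, hw, Nat.succ_mul, Nat.add_sub_cancel]
    have hvd : ((FreeMonoid.toList v).drop D₁).length = k * D₁ := by
      rw [List.length_drop, hv, Nat.succ_mul, Nat.add_sub_cancel]
    have hlen1 : (FreeMonoid.toList (σ (FreeMonoid.ofList ((FreeMonoid.toList w).take D₁)))).length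
        = (FreeMonoid.toList (σ (FreeMonoid.ofList ((FreeMonoid.toList v).take D₁)))).length := by
      rw [hσlen _ (by simpa using hwt), hσlen _ (by simpa using hvt)]
    have heq' : FreeMonoid.toList (σ (FreeMonoid.ofList ((FreeMonoid.toList w).take D₁))) ++
        FreeMonoid.toList (stmt18.Tmap σ D₁ k (FreeMonoid.ofList ((FreeMonoid.toList w).drop D₁)))
        = FreeMonoid.toList (σ (FreeMonoid.ofList ((FreeMonoid.toList v).take D₁))) ++
        FreeMonoid.toList (stmt18.Tmap σ D₁ k (FreeMonoid.ofList ((FreeMonoid.toList v).drop D₁))) := by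
      have := congrArg FreeMonoid.toList heq
      simpa [FreeMonoid.toList_mul] using this
    obtain ⟨h1, h2⟩ := List.append_inj heq' hlen1
    have htake : (FreeMonoid.toList w).take D₁ = (FreeMonoid.toList v).take D₁ := by
      have := hσinj (FreeMonoid.toList.injective h1)
      simpa using congrArg FreeMonoid.toList this
    have hdrop : (FreeMonoid.toList w).drop D₁ = (FreeMonoid.toList v).drop D₁ := by
      have := ih (by simpa using hwd) (by simpa using hvd) (FreeMonoid.toList.injective h2)
      simpa using congrArg FreeMonoid.toList this
    apply FreeMonoid.toList.injective
    rw [← List.take_append_drop D₁ (FreeMonoid.toList w),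
      ← List.take_append_drop D₁ (FreeMonoid.toList v), htake, hdrop]

/-- Key multiplicative step. -/
theorem step (hσlen : ∀ w : FreeMonoid (Fin n), (FreeMonoid.toList w).length = D₁ →
      (FreeMonoid.toList (σ w)).length = D') (k : ℕ)
    (q R : MonoidAlgebra F (FreeMonoid (Fin n)))
    (hq : ∀ w ∈ q.coeff.support, (FreeMonoid.toList w).length = D₁) :
    tau (stmt18.Tmap σ D₁ (k + 1)) (q * R)
      = tau σ q * tau (stmt18.Tmap σ D₁ k) R := by
  classical
  conv_lhs => rw [← MonoidAlgebra.sum_coeff_single q, Finsupp.sum_mul]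
  conv_rhs => rw [← MonoidAlgebra.sum_coeff_single q]
  rw [tau_sum, tau_sum, Finsupp.sum_mul]
  apply Finsupp.sum_congr
  intro w hw
  have hwD : (FreeMonoid.toList w).length = D₁ := hq w hw
  conv_lhs => rw [← MonoidAlgebra.sum_coeff_single R, Finsupp.mul_sum]
  conv_rhs => rw [← MonoidAlgebra.sum_coeff_single R]
  rw [tau_sum, tau_sum, Finsupp.mul_sum]
  apply Finsupp.sum_congr
  intro v _
  show tau (stmt18.Tmap σ D₁ (k + 1)) (MonoidAlgebra.single w (q.coeff w) * MonoidAlgebra.single v (R.coeff v))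
    = tau σ (MonoidAlgebra.single w (q.coeff w)) * tau (stmt18.Tmap σ D₁ k) (MonoidAlgebra.single v (R.coeff v))
  rw [MonoidAlgebra.single_mul_single, tau_single, tau_single, tau_single,
    Tmap_mul σ k w v hwD, MonoidAlgebra.single_mul_single]

theorem prod_map (hσlen : ∀ w : FreeMonoid (Fin n), (FreeMonoid.toList w).length = D₁ →
      (FreeMonoid.toList (σ w)).length = D')
    (l : List (MonoidAlgebra F (FreeMonoid (Fin n))))
    (hl : ∀ q ∈ l, ∀ w ∈ q.coeff.support, (FreeMonoid.toList w).length = D₁) :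
    (l.map (tau σ)).prod = tau (stmt18.Tmap σ D₁ l.length) l.prod := by
  induction l with
  | nil =>
    simp only [List.map_nil, List.prod_nil, List.length_nil]
    have h1 : (1 : MonoidAlgebra F (FreeMonoid (Fin n)))
        = MonoidAlgebra.single 1 1 := MonoidAlgebra.one_def
    rw [h1, tau_single]
    exact MonoidAlgebra.one_def
  | cons q t ih =>
    simp only [List.map_cons, List.prod_cons, List.length_cons]
    rw [ih (fun r hr => hl r (List.mem_cons_of_mem _ hr)),
      ← step σ hσlen t.length q t.prod (hl q (List.mem_cons_self))]

theorem prod_support (l : List (MonoidAlgebra F (FreeMonoid (Fin n))))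
    (hl : ∀ q ∈ l, ∀ w ∈ q.coeff.support, (FreeMonoid.toList w).length = D₁) :
    ∀ w ∈ l.prod.coeff.support, (FreeMonoid.toList w).length = l.length * D₁ := by
  classical
  induction l with
  | nil =>
    intro w hw
    rw [List.prod_nil, MonoidAlgebra.one_def, MonoidAlgebra.coeff_single] at hw
    have := Finsupp.support_single_subset hw
    simp only [Finset.mem_singleton] at this
    subst this
    simp
  | cons q t ih =>
    intro w hw
    rw [List.prod_cons] at hw
    have := MonoidAlgebra.support_coeff_mul_subset q t.prod hw
    rw [Finset.mem_mul] at this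
    obtain ⟨a, ha, b, hb, rfl⟩ := this
    rw [FreeMonoid.toList_mul, List.length_append,
      hl q (List.mem_cons_self) a ha,
      ih (fun r hr => hl r (List.mem_cons_of_mem _ hr)) b hb,
      List.length_cons, Nat.succ_mul]
    exact Nat.add_comm _ _

end stmt18aux

/-- Abstract form of the structure-transformation lemma: if
`f = Σ_{i∈[s]} ∏_{j∈[D₂]} Q_{ij} ≠ 0` with each `Q_{ij}` homogeneous of degree
`D₁`, and `τ = mapDomain σ` is the `F`-linear substitution induced by an
injective map `σ` on monomials sending degree-`D₁` words to words of a fixed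
length `D'` (so each `Q_{ij}` is replaced by `Q̂_{ij} = τ(Q_{ij})` over new
variables, `Q_{ij} ≠ 0` implies `Q̂_{ij} ≠ 0`, and linear relations
`Σ_i c_i Q_{i,j} = 0` hold iff `Σ_i c_i Q̂_{i,j} = 0`), then
`f̂ = Σ_i ∏_j Q̂_{ij} ≠ 0`. -/
theorem stmt18 {F : Type*} [Field F] {n n' s D₂ D₁ D' : ℕ}
    (σ : FreeMonoid (Fin n) → FreeMonoid (Fin n'))
    (hσinj : Function.Injective σ)
    (hσlen : ∀ w : FreeMonoid (Fin n), (FreeMonoid.toList w).length = D₁ →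
      (FreeMonoid.toList (σ w)).length = D')
    (Q : Fin s → Fin D₂ → MonoidAlgebra F (FreeMonoid (Fin n)))
    (hQhom : ∀ i j, ∀ w ∈ (Q i j).coeff.support, (FreeMonoid.toList w).length = D₁)
    (Qhat : Fin s → Fin D₂ → MonoidAlgebra F (FreeMonoid (Fin n')))
    (hQhat : ∀ i j, Qhat i j = MonoidAlgebra.mapDomain σ (Q i j))
    (hnz : ∀ i j, Q i j ≠ 0 → Qhat i j ≠ 0)
    (hlin : ∀ (j : Fin D₂) (cv : Fin s → F),
      (∑ i, cv i • Q i j) = 0 ↔ (∑ i, cv i • Qhat i j) = 0)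
    (hne : (∑ i, (List.ofFn fun j => Q i j).prod) ≠ 0) :
    (∑ i, (List.ofFn fun j => Qhat i j).prod) ≠ 0 := by
  classical
  set f : MonoidAlgebra F (FreeMonoid (Fin n)) := ∑ i, (List.ofFn fun j => Q i j).prod with hf
  have key : (∑ i, (List.ofFn fun j => Qhat i j).prod)
      = stmt18aux.tau (stmt18.Tmap σ D₁ D₂) f := by
    rw [hf, stmt18aux.tau_finset_sum]
    apply Finset.sum_congr rfl
    intro i _
    have h1 : (List.ofFn fun j => Qhat i j)
        = (List.ofFn fun j => Q i j).map (stmt18aux.tau σ) := by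
      rw [List.map_ofFn]
      congr 1
      funext j
      exact hQhat i j
    rw [h1, stmt18aux.prod_map σ hσlen _ (by
      intro q hq
      rw [List.mem_ofFn] at hq
      obtain ⟨j, rfl⟩ := hq
      exact hQhom i j), List.length_ofFn]
  intro h0
  rw [key] at h0
  apply hne
  have hsupp : (f.coeff.support : Set (FreeMonoid (Fin n)))
      ⊆ {w | (FreeMonoid.toList w).length = D₂ * D₁} := by
    intro w hw
    simp only [Finset.mem_coe] at hw
    rw [hf, MonoidAlgebra.coeff_sum] at hw
    have := Finsupp.mem_support_finset_sum w hw
    obtain ⟨i, _, hwi⟩ := this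
    have := stmt18aux.prod_support (D₁ := D₁) _ (by
      intro q hq
      rw [List.mem_ofFn] at hq
      obtain ⟨j, rfl⟩ := hq
      exact hQhom i j) w hwi
    rw [List.length_ofFn] at this
    exact this
  have hinj := Finsupp.mapDomain_injOn (M := F)
    {w : FreeMonoid (Fin n) | (FreeMonoid.toList w).length = D₂ * D₁}
    (stmt18aux.Tmap_injOn σ hσinj hσlen D₂)
  have : f = 0 := by
    apply MonoidAlgebra.coeff_injective
    apply hinj (by exact hsupp) (by simp)
    rw [show Finsupp.mapDomain (stmt18.Tmap σ D₁ D₂) f.coeff = (stmt18aux.tau (stmt18.Tmap σ D₁ D₂) f).coeff from rfl,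
      h0]
    exact Finsupp.mapDomain_zero.symm
  exact this
end
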